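/- For all real t ≤ 0 and all α, β ∈ ℝ with cos β ≥ cos α, one has | (t − e^{iα})/(t − e^{iβ}) | ≤ exp( t (cos β − cos α)/(1 − t)² ). -/

import Mathlib

open Complex Real

/-- Pointwise bound on the negative real axis: for `t ≤ 0` and `cos β ≥ cos α`,
`|(t - e^{iα})/(t - e^{iβ})| ≤ exp(t (cos β - cos α)/(1 - t)²)`. -/
theorem ratio_pointwise_bound (t : ℝ) (ht : t ≤ 0) (α β : ℝ)
    (hcos : Real.cos α ≤ Real.cos β) :
    ‖(((t : ℂ) - Complex.exp (Complex.I * α)) / ((t : ℂ) - Complex.exp (Complex.I * β)))‖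
      ≤ Real.exp (t * (Real.cos β - Real.cos α) / (1 - t) ^ 2) := by
  set A := ‖(t : ℂ) - Complex.exp (Complex.I * α)‖ with hA
  set B := ‖(t : ℂ) - Complex.exp (Complex.I * β)‖ with hB
  rw [norm_div]
  rcases eq_or_lt_of_le (norm_nonneg _ : (0:ℝ) ≤ B) with hB0 | hB0
  · rw [← hB0, div_zero]
    exact (Real.exp_pos _).le
  have hA2 : A ^ 2 = t ^ 2 + 1 - 2 * t * Real.cos α := by
    rw [hA, Complex.sq_norm, Complex.normSq_apply]
    simp only [Complex.sub_re, Complex.sub_im, Complex.ofReal_re, Complex.ofReal_im,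
      Complex.exp_re, Complex.exp_im, Complex.mul_re, Complex.mul_im,
      Complex.I_re, Complex.I_im]
    simp
    nlinarith [Real.sin_sq_add_cos_sq α]
  have hB2 : B ^ 2 = t ^ 2 + 1 - 2 * t * Real.cos β := by
    rw [hB, Complex.sq_norm, Complex.normSq_apply]
    simp only [Complex.sub_re, Complex.sub_im, Complex.ofReal_re, Complex.ofReal_im,
      Complex.exp_re, Complex.exp_im, Complex.mul_re, Complex.mul_im,
      Complex.I_re, Complex.I_im]
    simp
    nlinarith [Real.sin_sq_add_cos_sq β]
  have ht1 : (0:ℝ) < (1 - t) ^ 2 := by nlinarith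
  set x : ℝ := 2 * t * (Real.cos β - Real.cos α) / (1 - t) ^ 2 with hx
  have hxe : x + 1 ≤ Real.exp x := Real.add_one_le_exp x
  have hcb : Real.cos β ≤ 1 := Real.cos_le_one β
  have hca : -1 ≤ Real.cos α := Real.neg_one_le_cos α
  -- key algebraic inequality : A^2 ≤ (1 + x) * B^2
  have hkey : A ^ 2 ≤ (1 + x) * B ^ 2 := by
    rw [hx, show (1:ℝ) + 2 * t * (Real.cos β - Real.cos α) / (1 - t) ^ 2
        = ((1 - t) ^ 2 + 2 * t * (Real.cos β - Real.cos α)) / (1 - t) ^ 2 by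
      rw [add_div, div_self ht1.ne']]
    rw [div_mul_eq_mul_div, le_div_iff₀ ht1, hA2, hB2]
    nlinarith [mul_nonneg (mul_nonneg (sq_nonneg t) (sub_nonneg.2 hcos))
      (sub_nonneg.2 hcb)]
  have hEx : Real.exp (t * (Real.cos β - Real.cos α) / (1 - t) ^ 2) ^ 2 = Real.exp x := by
    rw [← Real.exp_nat_mul]
    congr 1
    rw [hx]; push_cast; ring
  have hE : 0 ≤ Real.exp (t * (Real.cos β - Real.cos α) / (1 - t) ^ 2) := (Real.exp_pos _).le
  rw [div_le_iff₀ hB0]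
  have h2 : A ^ 2 ≤ (Real.exp (t * (Real.cos β - Real.cos α) / (1 - t) ^ 2) * B) ^ 2 := by
    rw [mul_pow, hEx]
    calc A ^ 2 ≤ (1 + x) * B ^ 2 := hkey
      _ ≤ Real.exp x * B ^ 2 := by nlinarith [sq_nonneg B]
  exact (pow_le_pow_iff_left₀ (norm_nonneg _) (mul_nonneg hE hB0.le) two_ne_zero).1 h2
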